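/- Let n ≥ 1, m ∈ ℕ ∪ {0}, 0 ≤ α < n, 0 < δ < 1 with mδ < n − α, α̃ = mδ + α, 1 ≤ r ≤ ∞ and δ̃ < δ. If a pair of weights (v,w) satisfies the local condition (L) with constant C, then it satisfies the global condition (G) with constant c·C, where c depends only on n, r, α̃, δ and δ̃. -/

import Mathlib

open MeasureTheory Metric ENNReal NNReal

noncomputable section

/-- Euclidean space `ℝⁿ`. -/
abbrev E (n : ℕ) := EuclideanSpace ℝ (Fin n)

/-- `(∫ f^p dμ)^(1/p)` for finite `p`, and the essential supremum for `p = ∞`. -/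
noncomputable def eN {n : ℕ} (p : ℝ≥0∞) (f : E n → ℝ≥0∞) (μ : Measure (E n)) : ℝ≥0∞ :=
  if p = ∞ then essSup f μ else (∫⁻ y, f y ^ p.toReal ∂μ) ^ (1 / p.toReal)

/-- The two-weight class `H(r, αt, δt)` with constant `C`, where `r'` denotes the
conjugate exponent of `r` (so the `r = 1`, `r' = ∞` case is the essential supremum,
built into `eN`). -/
def Hclass (n : ℕ) (r' : ℝ≥0∞) (αt δ δt : ℝ) (v w : E n → ℝ≥0∞) (C : ℝ≥0∞) : Prop :=
  ∀ (c : E n) (R : ℝ), 0 < R →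
    essSup (fun y => (w y)⁻¹) (volume.restrict (ball c R)) *
        volume (ball c R) ^ ((δ - δt) / (n : ℝ)) *
        eN r' (fun y =>
          v y * (volume (ball c R) ^ ((1 : ℝ) / (n : ℝ)) +
            ENNReal.ofReal (dist c y)) ^ (-((n : ℝ) - αt + δ))) volume ≤ C

/-- The local condition (L) with constant `C`. -/
def LocalCond (n : ℕ) (r r' : ℝ≥0∞) (αt δt : ℝ) (v w : E n → ℝ≥0∞) (C : ℝ≥0∞) : Prop :=
  ∀ (c : E n) (R : ℝ), 0 < R →
    essSup (fun y => (w y)⁻¹) (volume.restrict (ball c R)) *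
        volume (ball c R) ^ ((αt - δt) / (n : ℝ) - r⁻¹.toReal) *
        eN r' v ((volume (ball c R))⁻¹ • volume.restrict (ball c R)) ≤ C

/-- The global condition (G) with constant `C`. -/
def GlobalCond (n : ℕ) (r' : ℝ≥0∞) (αt δ δt : ℝ) (v w : E n → ℝ≥0∞) (C : ℝ≥0∞) : Prop :=
  ∀ (c : E n) (R : ℝ), 0 < R →
    essSup (fun y => (w y)⁻¹) (volume.restrict (ball c R)) *
        volume (ball c R) ^ ((δ - δt) / (n : ℝ)) *
        eN r' (fun y => v y * (ENNReal.ofReal (dist c y)) ^ (-((n : ℝ) - αt + δ)))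
          (volume.restrict ((ball c R)ᶜ)) ≤ C

/-- `b ∈ Λ(δ)` with Lipschitz-`δ` constant `Cb`. -/
def LipDelta {n : ℕ} (δ Cb : ℝ) (b : E n → ℝ) : Prop :=
  ∀ x y : E n, |b x - b y| ≤ Cb * dist x y ^ δ

/-- The size condition `S*_α` with constant `A`. -/
def SizeCond (n : ℕ) (α A : ℝ) (K : E n → ℝ) : Prop :=
  ∀ x : E n, x ≠ 0 → |K x| ≤ A * ‖x‖ ^ (α - (n : ℝ))

/-- The smoothness condition `H*_{α,∞}` with exponent `γ` and constant `A`. -/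
def SmoothCond (n : ℕ) (α γ A : ℝ) (K : E n → ℝ) : Prop :=
  ∀ x x' y : E n, 2 * dist x x' ≤ dist x y →
    |K (x - y) - K (x' - y)| + |K (y - x) - K (y - x')| ≤
      A * dist x x' ^ γ / dist x y ^ ((n : ℝ) - α + γ)

lemma exists_annulus {R d : ℝ} (hR : 0 < R) (hd : R ≤ d) :
    ∃ k : ℕ, 2 ^ k * R ≤ d ∧ d < 2 ^ (k + 1) * R := by
  have hex : ∃ k : ℕ, d < 2 ^ (k + 1) * R := by
    obtain ⟨j, hj⟩ := exists_nat_gt (d / R)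
    refine ⟨j, ?_⟩
    have h1 : d < j * R := (div_lt_iff₀ hR).mp hj
    have h2 : (j : ℝ) ≤ 2 ^ (j + 1) := by
      calc (j : ℝ) ≤ 2 ^ j := by exact_mod_cast (Nat.lt_two_pow_self (n := j)).le
        _ ≤ 2 ^ (j + 1) := by
            exact_mod_cast Nat.pow_le_pow_right (by norm_num) (Nat.le_succ j)
    exact h1.trans_le (mul_le_mul_of_nonneg_right h2 hR.le)
  classical
  refine ⟨Nat.find hex, ?_, Nat.find_spec hex⟩
  rcases Nat.eq_zero_or_eq_succ_pred (Nat.find hex) with h0 | hsucc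
  · rw [h0]; simpa using hd
  · rw [hsucc]
    have := Nat.find_min hex (m := Nat.find hex - 1) (by omega)
    push_neg at this
    simpa using this

lemma real_exponent_id {n k : ℕ} (hn : (0:ℝ) < n) {αt δ δt R : ℝ} (hR : 0 < R) :
    ((R ^ n : ℝ) ^ ((δ - δt) / (n : ℝ)) * ((2:ℝ) ^ k * R) ^ (-((n : ℝ) - αt + δ)) : ℝ)
      = (((2:ℝ) ^ (k + 1) * R) ^ n) ^ ((αt - δt) / (n : ℝ) - 1) *
        ((2:ℝ) ^ ((n : ℝ) - αt + δt) * ((2:ℝ) ^ (-(δ - δt))) ^ k) := by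
  have h2 : (0:ℝ) < 2 := by norm_num
  have hne : (n : ℝ) ≠ 0 := hn.ne'
  apply Real.log_injOn_pos (Set.mem_Ioi.2 (by positivity)) (Set.mem_Ioi.2 (by positivity))
  rw [Real.log_mul (by positivity) (by positivity),
    Real.log_mul (by positivity) (by positivity),
    Real.log_rpow (by positivity), Real.log_rpow (by positivity),
    Real.log_rpow (by positivity), Real.log_pow, Real.log_pow,
    Real.log_mul (by positivity) hR.ne', Real.log_mul (by positivity) hR.ne',
    Real.log_pow, Real.log_pow,
    Real.log_mul (by positivity) (by positivity), Real.log_rpow h2,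
    Real.log_pow, Real.log_rpow h2]
  field_simp
  push_cast
  ring

lemma ennreal_exponent_id {n k : ℕ} (hn : (0:ℝ) < n) {αt δ δt R : ℝ} (hR : 0 < R)
    {κ : ℝ≥0∞} (hκ0 : κ ≠ 0) (hκt : κ ≠ ⊤) :
    (ENNReal.ofReal (R ^ n) * κ) ^ ((δ - δt) / (n : ℝ)) *
      (ENNReal.ofReal ((2:ℝ) ^ k * R)) ^ (-((n : ℝ) - αt + δ))
    = (ENNReal.ofReal (((2:ℝ) ^ (k + 1) * R) ^ n) * κ) ^ ((αt - δt) / (n : ℝ) - 1) *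
      (κ ^ ((δ - αt) / (n : ℝ) + 1) *
        ENNReal.ofReal ((2:ℝ) ^ ((n : ℝ) - αt + δt)) *
        (ENNReal.ofReal ((2:ℝ) ^ (-(δ - δt)))) ^ k) := by
  have h2 : (0:ℝ) < 2 := by norm_num
  rw [ENNReal.mul_rpow_of_ne_top ENNReal.ofReal_ne_top hκt,
    ENNReal.mul_rpow_of_ne_top ENNReal.ofReal_ne_top hκt,
    ENNReal.ofReal_rpow_of_pos (by positivity),
    ENNReal.ofReal_rpow_of_pos (by positivity),
    ENNReal.ofReal_rpow_of_pos (by positivity),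
    ← ENNReal.ofReal_pow (by positivity)]
  have hκ : κ ^ ((δ - δt) / (n : ℝ)) =
      κ ^ ((αt - δt) / (n : ℝ) - 1) * κ ^ ((δ - αt) / (n : ℝ) + 1) := by
    rw [← ENNReal.rpow_add _ _ hκ0 hκt]
    congr 1
    field_simp
    ring
  calc ENNReal.ofReal ((R ^ n) ^ ((δ - δt) / (n : ℝ))) * κ ^ ((δ - δt) / (n : ℝ)) *
        ENNReal.ofReal (((2:ℝ) ^ k * R) ^ (-((n : ℝ) - αt + δ)))
      = ENNReal.ofReal ((R ^ n) ^ ((δ - δt) / (n : ℝ)) *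
          ((2:ℝ) ^ k * R) ^ (-((n : ℝ) - αt + δ))) * κ ^ ((δ - δt) / (n : ℝ)) := by
        rw [ENNReal.ofReal_mul (by positivity)]; ring
    _ = ENNReal.ofReal ((((2:ℝ) ^ (k + 1) * R) ^ n) ^ ((αt - δt) / (n : ℝ) - 1) *
          ((2:ℝ) ^ ((n : ℝ) - αt + δt) * ((2:ℝ) ^ (-(δ - δt))) ^ k)) *
          (κ ^ ((αt - δt) / (n : ℝ) - 1) * κ ^ ((δ - αt) / (n : ℝ) + 1)) := by
        rw [real_exponent_id hn hR, ← hκ]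
    _ = ENNReal.ofReal ((((2:ℝ) ^ (k + 1) * R) ^ n) ^ ((αt - δt) / (n : ℝ) - 1)) *
          κ ^ ((αt - δt) / (n : ℝ) - 1) *
          (κ ^ ((δ - αt) / (n : ℝ) + 1) *
            ENNReal.ofReal ((2:ℝ) ^ ((n : ℝ) - αt + δt) * ((2:ℝ) ^ (-(δ - δt))) ^ k)) := by
        rw [ENNReal.ofReal_mul (by positivity)]; ring
    _ = ENNReal.ofReal ((((2:ℝ) ^ (k + 1) * R) ^ n) ^ ((αt - δt) / (n : ℝ) - 1)) *
          κ ^ ((αt - δt) / (n : ℝ) - 1) *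
          (κ ^ ((δ - αt) / (n : ℝ) + 1) *
            ENNReal.ofReal ((2:ℝ) ^ ((n : ℝ) - αt + δt)) *
            ENNReal.ofReal (((2:ℝ) ^ (-(δ - δt))) ^ k)) := by
        rw [ENNReal.ofReal_mul (by positivity)]; ring

lemma term_bound {n k : ℕ} (hn : (0:ℝ) < n) {αt δ δt R : ℝ} (hR : 0 < R)
    {κ : ℝ≥0∞} (hκ0 : κ ≠ 0) (hκt : κ ≠ ⊤)
    {W0 Wk T C : ℝ≥0∞} (hW : W0 ≤ Wk)
    (hloc : Wk * (ENNReal.ofReal (((2:ℝ) ^ (k + 1) * R) ^ n) * κ) ^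
        ((αt - δt) / (n : ℝ) - 1) * T ≤ C) :
    W0 * (ENNReal.ofReal (R ^ n) * κ) ^ ((δ - δt) / (n : ℝ)) *
        (ENNReal.ofReal ((2:ℝ) ^ k * R)) ^ (-((n : ℝ) - αt + δ)) * T
      ≤ C * (κ ^ ((δ - αt) / (n : ℝ) + 1) *
          ENNReal.ofReal ((2:ℝ) ^ ((n : ℝ) - αt + δt)) *
          (ENNReal.ofReal ((2:ℝ) ^ (-(δ - δt)))) ^ k) := by
  set M : ℝ≥0∞ := κ ^ ((δ - αt) / (n : ℝ) + 1) *
      ENNReal.ofReal ((2:ℝ) ^ ((n : ℝ) - αt + δt)) *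
      (ENNReal.ofReal ((2:ℝ) ^ (-(δ - δt)))) ^ k with hM
  calc W0 * (ENNReal.ofReal (R ^ n) * κ) ^ ((δ - δt) / (n : ℝ)) *
        (ENNReal.ofReal ((2:ℝ) ^ k * R)) ^ (-((n : ℝ) - αt + δ)) * T
      = W0 * ((ENNReal.ofReal (R ^ n) * κ) ^ ((δ - δt) / (n : ℝ)) *
          (ENNReal.ofReal ((2:ℝ) ^ k * R)) ^ (-((n : ℝ) - αt + δ))) * T := by ring
    _ = W0 * ((ENNReal.ofReal (((2:ℝ) ^ (k + 1) * R) ^ n) * κ) ^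
          ((αt - δt) / (n : ℝ) - 1) * M) * T := by rw [ennreal_exponent_id hn hR hκ0 hκt]
    _ = (W0 * (ENNReal.ofReal (((2:ℝ) ^ (k + 1) * R) ^ n) * κ) ^
          ((αt - δt) / (n : ℝ) - 1) * T) * M := by ring
    _ ≤ (Wk * (ENNReal.ofReal (((2:ℝ) ^ (k + 1) * R) ^ n) * κ) ^
          ((αt - δt) / (n : ℝ) - 1) * T) * M := by gcongr
    _ ≤ C * M := by gcongr

/-- for `δ̃ < δ`, the local condition (L) implies the global
condition (G), quantitatively. -/
theorem statement3 (n m : ℕ) (α δ δt αt : ℝ) (r r' : ℝ≥0∞)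
    (hn : 1 ≤ n) (hα0 : 0 ≤ α) (hαn : α < (n : ℝ)) (hδ0 : 0 < δ) (hδ1 : δ < 1)
    (hmδ : (m : ℝ) * δ < (n : ℝ) - α) (hαt : αt = (m : ℝ) * δ + α)
    (hr : 1 ≤ r) (hconj : r⁻¹ + r'⁻¹ = 1) (hδt : δt < δ) :
    ∃ c : ℝ≥0, 0 < c ∧
      ∀ (v w : E n → ℝ≥0∞), Measurable v → Measurable w → ∀ C : ℝ≥0,
        LocalCond n r r' αt δt v w (C : ℝ≥0∞) →
          GlobalCond n r' αt δ δt v w ((c : ℝ≥0∞) * C) := by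
  classical
  have hn0 : (0:ℝ) < n := by exact_mod_cast hn
  haveI : Nontrivial (E n) := by
    refine Module.nontrivial_of_finrank_pos (R := ℝ) (M := E n) ?_
    rw [finrank_euclideanSpace_fin]; omega
  set κ : ℝ≥0∞ := volume (ball (0 : E n) 1) with hκdef
  have hκ0 : κ ≠ 0 := (measure_ball_pos volume _ one_pos).ne'
  have hκt : κ ≠ ⊤ := measure_ball_lt_top.ne
  have volB : ∀ (c : E n) (ρ : ℝ), 0 ≤ ρ →
      volume (ball c ρ) = ENNReal.ofReal (ρ ^ n) * κ := by
    intro c ρ hρ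
    rw [Measure.addHaar_ball volume c hρ, finrank_euclideanSpace_fin]
  have hβ : 0 < (n : ℝ) - αt + δ := by rw [hαt]; linarith
  -- notation
  set q : ℝ≥0∞ := ENNReal.ofReal ((2:ℝ) ^ (-(δ - δt))) with hq
  have hq1 : q < 1 := by
    rw [hq]
    refine ENNReal.ofReal_lt_one.2 ?_
    exact Real.rpow_lt_one_of_one_lt_of_neg (by norm_num) (by linarith)
  have hq0 : q ≠ 0 := by
    rw [hq]; simp only [ne_eq, ENNReal.ofReal_eq_zero, not_le]; positivity
  set M : ℝ≥0∞ := κ ^ ((δ - αt) / (n : ℝ) + 1) with hMdef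
  have hM0 : M ≠ 0 := by
    rw [hMdef]; simp [ENNReal.rpow_eq_zero_iff, hκ0, hκt]
  have hMt : M ≠ ⊤ := by
    rw [hMdef]; simp [ENNReal.rpow_eq_top_iff, hκ0, hκt]
  set D : ℝ≥0∞ := ENNReal.ofReal ((2:ℝ) ^ ((n : ℝ) - αt + δt)) with hD
  have hD0 : D ≠ 0 := by
    rw [hD]; simp only [ne_eq, ENNReal.ofReal_eq_zero, not_le]; positivity
  have hDt : D ≠ ⊤ := ENNReal.ofReal_ne_top
  by_cases hr' : r' = ∞
  · -- `r = 1`, essential supremum case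
    have hrr : r = 1 := by
      rw [hr'] at hconj
      simp only [ENNReal.inv_top, add_zero] at hconj
      exact ENNReal.inv_eq_one.mp hconj
    set c0 : ℝ≥0∞ := M * D * (1 - q)⁻¹ with hc0
    have h1q : (1:ℝ≥0∞) - q ≠ 0 := by
      simp only [ne_eq, tsub_eq_zero_iff_le, not_le]; exact hq1
    have hc0t : c0 ≠ ⊤ := by
      rw [hc0]
      exact ENNReal.mul_ne_top (ENNReal.mul_ne_top hMt hDt) (ENNReal.inv_ne_top.2 h1q)
    have hc00 : c0 ≠ 0 := by
      rw [hc0]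
      refine mul_ne_zero (mul_ne_zero hM0 hD0) ?_
      simp only [ne_eq, ENNReal.inv_eq_zero]
      exact (tsub_le_self.trans_lt ENNReal.one_lt_top).ne
    refine ⟨c0.toNNReal, ENNReal.toNNReal_pos hc00 hc0t, ?_⟩
    intro v w hv hw C hL c R hR
    rw [ENNReal.coe_toNNReal hc0t]
    set W0 : ℝ≥0∞ := essSup (fun y => (w y)⁻¹) (volume.restrict (ball c R)) with hW0
    set T : ℕ → ℝ≥0∞ := fun j => essSup v (volume.restrict (ball c (2 ^ j * R))) with hT
    have hρpos : ∀ j : ℕ, (0:ℝ) < 2 ^ j * R := fun j => by positivity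
    have hlock : ∀ k : ℕ,
        essSup (fun y => (w y)⁻¹) (volume.restrict (ball c (2 ^ (k+1) * R))) *
          (ENNReal.ofReal (((2:ℝ) ^ (k+1) * R) ^ n) * κ) ^ ((αt - δt) / (n : ℝ) - 1) *
          T (k+1) ≤ C := by
      intro k
      have h := hL c ((2:ℝ) ^ (k+1) * R) (hρpos (k+1))
      simp only [eN, if_pos hr'] at h
      rw [essSup_ennreal_smul_measure (by
        simp only [ne_eq, ENNReal.inv_eq_zero]
        exact measure_ball_lt_top.ne)] at h
      rw [hrr] at h
      simp only [inv_one, ENNReal.toReal_one] at h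
      rwa [volB c _ (hρpos (k+1)).le] at h
    have hWmono : ∀ k : ℕ, W0 ≤
        essSup (fun y => (w y)⁻¹) (volume.restrict (ball c (2 ^ (k+1) * R))) := by
      intro k
      refine essSup_mono_measure' (Measure.restrict_mono (ball_subset_ball ?_) le_rfl)
      have h2p : (1:ℝ) ≤ 2 ^ (k+1) := one_le_pow₀ (by norm_num)
      exact le_mul_of_one_le_left hR.le h2p
    have key : ∀ k : ℕ,
        W0 * (ENNReal.ofReal (R ^ n) * κ) ^ ((δ - δt) / (n : ℝ)) *
          (ENNReal.ofReal ((2:ℝ) ^ k * R)) ^ (-((n : ℝ) - αt + δ)) * T (k+1)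
        ≤ C * (M * D * q ^ k) := by
      intro k
      exact term_bound hn0 hR hκ0 hκt (hWmono k) (hlock k)
    simp only [eN, if_pos hr']
    rw [volB c R hR.le]
    have hS : essSup (fun y => v y * (ENNReal.ofReal (dist c y)) ^ (-((n : ℝ) - αt + δ)))
        (volume.restrict ((ball c R)ᶜ))
        ≤ ∑' k : ℕ, (ENNReal.ofReal ((2:ℝ) ^ k * R)) ^ (-((n : ℝ) - αt + δ)) * T (k+1) := by
      refine essSup_le_of_ae_le _ ?_
      have hae : ∀ᵐ y ∂(volume : Measure (E n)), ∀ k : ℕ,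
          y ∈ ball c ((2:ℝ) ^ (k+1) * R) → v y ≤ T (k+1) := by
        rw [ae_all_iff]
        intro k
        exact (ae_restrict_iff' measurableSet_ball).mp (ae_le_essSup v)
      filter_upwards [ae_restrict_of_ae hae, ae_restrict_mem measurableSet_ball.compl]
        with y hy hyc
      have hd : R ≤ dist c y := by
        rw [Set.mem_compl_iff, mem_ball, not_lt, dist_comm] at hyc
        exact hyc
      obtain ⟨k, hk1, hk2⟩ := exists_annulus hR hd
      have h1 : v y ≤ T (k+1) := hy k (by rw [mem_ball, dist_comm]; exact hk2)
      have h2 : (ENNReal.ofReal (dist c y)) ^ (-((n : ℝ) - αt + δ))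
          ≤ (ENNReal.ofReal ((2:ℝ) ^ k * R)) ^ (-((n : ℝ) - αt + δ)) := by
        rw [ENNReal.rpow_neg, ENNReal.rpow_neg]
        exact ENNReal.inv_le_inv.mpr
          (ENNReal.rpow_le_rpow (ENNReal.ofReal_le_ofReal hk1) hβ.le)
      calc v y * (ENNReal.ofReal (dist c y)) ^ (-((n : ℝ) - αt + δ))
          ≤ T (k+1) * (ENNReal.ofReal ((2:ℝ) ^ k * R)) ^ (-((n : ℝ) - αt + δ)) :=
            mul_le_mul' h1 h2
        _ = (ENNReal.ofReal ((2:ℝ) ^ k * R)) ^ (-((n : ℝ) - αt + δ)) * T (k+1) :=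
            mul_comm _ _
        _ ≤ _ := ENNReal.le_tsum k
    calc W0 * (ENNReal.ofReal (R ^ n) * κ) ^ ((δ - δt) / (n : ℝ)) *
          essSup (fun y => v y * (ENNReal.ofReal (dist c y)) ^ (-((n : ℝ) - αt + δ)))
            (volume.restrict ((ball c R)ᶜ))
        ≤ W0 * (ENNReal.ofReal (R ^ n) * κ) ^ ((δ - δt) / (n : ℝ)) *
          ∑' k : ℕ, (ENNReal.ofReal ((2:ℝ) ^ k * R)) ^ (-((n : ℝ) - αt + δ)) * T (k+1) := by
          gcongr
      _ = ∑' k : ℕ, W0 * (ENNReal.ofReal (R ^ n) * κ) ^ ((δ - δt) / (n : ℝ)) *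
          (ENNReal.ofReal ((2:ℝ) ^ k * R)) ^ (-((n : ℝ) - αt + δ)) * T (k+1) := by
          rw [← ENNReal.tsum_mul_left]
          exact tsum_congr fun k => by ring
      _ ≤ ∑' k : ℕ, C * (M * D * q ^ k) :=
          ENNReal.tsum_le_tsum fun k => key k
      _ = C * (M * D) * ∑' k : ℕ, q ^ k := by
          rw [← ENNReal.tsum_mul_left]
          exact tsum_congr fun k => by ring
      _ = C * (M * D) * (1 - q)⁻¹ := by rw [ENNReal.tsum_geometric]
      _ = c0 * C := by rw [hc0]; ring
  · -- `1 ≤ r' < ∞`, integral case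
    have hr'1 : 1 ≤ r' := by
      refine ENNReal.inv_le_one.mp ?_
      calc r'⁻¹ ≤ r⁻¹ + r'⁻¹ := le_add_self
        _ = 1 := hconj
    set p : ℝ := r'.toReal with hp
    have hp1 : 1 ≤ p := by
      have := ENNReal.toReal_mono hr' hr'1
      simpa using this
    have hp0 : 0 < p := lt_of_lt_of_le one_pos hp1
    have h1p : (0:ℝ) ≤ 1/p := by positivity
    have hrinv : r⁻¹.toReal = 1 - 1/p := by
      have hinvle : r'⁻¹ ≤ 1 := ENNReal.inv_le_one.2 hr'1
      have h1 : r⁻¹ = 1 - r'⁻¹ :=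
        ENNReal.eq_sub_of_add_eq (hinvle.trans_lt ENNReal.one_lt_top).ne hconj
      rw [h1, ENNReal.toReal_sub_of_le hinvle ENNReal.one_ne_top, ENNReal.toReal_one,
        ENNReal.toReal_inv, one_div, hp]
    have hcancel : ∀ x : ℝ≥0∞, (x ^ p) ^ (1/p) = x := by
      intro x
      rw [← ENNReal.rpow_mul, mul_one_div, div_self hp0.ne', ENNReal.rpow_one]
    have hcancel' : ∀ x : ℝ≥0∞, (x ^ (1/p)) ^ p = x := by
      intro x
      rw [← ENNReal.rpow_mul, one_div, inv_mul_cancel₀ hp0.ne', ENNReal.rpow_one]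
    set G : ℝ≥0∞ := (1 - q ^ p)⁻¹ with hG
    have hqp1 : q ^ p < 1 := ENNReal.rpow_lt_one hq1 hp0
    have hGt : G ≠ ⊤ := by
      rw [hG]
      exact ENNReal.inv_ne_top.2 (by simp only [ne_eq, tsub_eq_zero_iff_le, not_le]; exact hqp1)
    have hG0 : G ≠ 0 := by
      rw [hG]
      simp only [ne_eq, ENNReal.inv_eq_zero]
      exact (tsub_le_self.trans_lt ENNReal.one_lt_top).ne
    have hGpt : G ^ (1/p) ≠ ⊤ := by
      simp [ENNReal.rpow_eq_top_iff, hG0, hGt]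
    have hGp0 : G ^ (1/p) ≠ 0 := by
      simp [ENNReal.rpow_eq_zero_iff, hG0, hGt]
    set c0 : ℝ≥0∞ := M * D * G ^ (1/p) with hc0
    have hc0t : c0 ≠ ⊤ := ENNReal.mul_ne_top (ENNReal.mul_ne_top hMt hDt) hGpt
    have hc00 : c0 ≠ 0 := mul_ne_zero (mul_ne_zero hM0 hD0) hGp0
    refine ⟨c0.toNNReal, ENNReal.toNNReal_pos hc00 hc0t, ?_⟩
    intro v w hv hw C hL c R hR
    rw [ENNReal.coe_toNNReal hc0t]
    set W0 : ℝ≥0∞ := essSup (fun y => (w y)⁻¹) (volume.restrict (ball c R)) with hW0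
    set I : ℕ → ℝ≥0∞ := fun j => ∫⁻ y in ball c ((2:ℝ) ^ j * R), v y ^ p with hI
    set c3 : ℕ → ℝ≥0∞ :=
      fun k => (ENNReal.ofReal ((2:ℝ) ^ k * R)) ^ (-((n : ℝ) - αt + δ)) with hc3
    have hρpos : ∀ j : ℕ, (0:ℝ) < 2 ^ j * R := fun j => by positivity
    have hc3t : ∀ k : ℕ, c3 k ≠ ⊤ := by
      intro k
      rw [hc3]
      simp only [ne_eq, ENNReal.rpow_eq_top_iff, not_or, not_and, not_lt]
      constructor
      · intro h
        exact absurd h (by simp only [ENNReal.ofReal_eq_zero, not_le]; positivity)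
      · intro h
        exact absurd h ENNReal.ofReal_ne_top
    have hlock : ∀ k : ℕ,
        essSup (fun y => (w y)⁻¹) (volume.restrict (ball c ((2:ℝ) ^ (k+1) * R))) *
          (ENNReal.ofReal (((2:ℝ) ^ (k+1) * R) ^ n) * κ) ^ ((αt - δt) / (n : ℝ) - 1) *
          (I (k+1)) ^ (1/p) ≤ C := by
      intro k
      have h := hL c ((2:ℝ) ^ (k+1) * R) (hρpos (k+1))
      simp only [eN, if_neg hr'] at h
      rw [← hp] at h
      rw [lintegral_smul_measure, volB c _ (hρpos (k+1)).le] at h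
      set V : ℝ≥0∞ := ENNReal.ofReal (((2:ℝ) ^ (k+1) * R) ^ n) * κ with hV
      have hV0 : V ≠ 0 := by
        rw [hV]
        refine mul_ne_zero ?_ hκ0
        simp only [ne_eq, ENNReal.ofReal_eq_zero, not_le]; positivity
      have hVt : V ≠ ⊤ := ENNReal.mul_ne_top ENNReal.ofReal_ne_top hκt
      rw [smul_eq_mul, ENNReal.mul_rpow_of_nonneg _ _ h1p, ENNReal.inv_rpow, ← ENNReal.rpow_neg] at h
      have hVe : V ^ ((αt - δt) / (n : ℝ) - r⁻¹.toReal) * V ^ (-(1/p))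
          = V ^ ((αt - δt) / (n : ℝ) - 1) := by
        rw [← ENNReal.rpow_add _ _ hV0 hVt]
        congr 1
        rw [hrinv]; ring
      calc essSup (fun y => (w y)⁻¹) (volume.restrict (ball c ((2:ℝ) ^ (k+1) * R))) *
            V ^ ((αt - δt) / (n : ℝ) - 1) * (I (k+1)) ^ (1/p)
          = essSup (fun y => (w y)⁻¹) (volume.restrict (ball c ((2:ℝ) ^ (k+1) * R))) *
            (V ^ ((αt - δt) / (n : ℝ) - r⁻¹.toReal) * V ^ (-(1/p))) * (I (k+1)) ^ (1/p) := by
            rw [hVe]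
        _ = essSup (fun y => (w y)⁻¹) (volume.restrict (ball c ((2:ℝ) ^ (k+1) * R))) *
            V ^ ((αt - δt) / (n : ℝ) - r⁻¹.toReal) * (V ^ (-(1/p)) * (I (k+1)) ^ (1/p)) := by
            ring
        _ ≤ C := h
    have hWmono : ∀ k : ℕ, W0 ≤
        essSup (fun y => (w y)⁻¹) (volume.restrict (ball c ((2:ℝ) ^ (k+1) * R))) := by
      intro k
      refine essSup_mono_measure' (Measure.restrict_mono (ball_subset_ball ?_) le_rfl)
      have h2p : (1:ℝ) ≤ 2 ^ (k+1) := one_le_pow₀ (by norm_num)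
      exact le_mul_of_one_le_left hR.le h2p
    have key : ∀ k : ℕ,
        W0 * (ENNReal.ofReal (R ^ n) * κ) ^ ((δ - δt) / (n : ℝ)) *
          c3 k * (I (k+1)) ^ (1/p) ≤ C * (M * D) * q ^ k := by
      intro k
      calc W0 * (ENNReal.ofReal (R ^ n) * κ) ^ ((δ - δt) / (n : ℝ)) *
            c3 k * (I (k+1)) ^ (1/p) ≤ C * (M * D * q ^ k) :=
          term_bound hn0 hR hκ0 hκt (hWmono k) (hlock k)
        _ = C * (M * D) * q ^ k := by ring
    simp only [eN, if_neg hr']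
    rw [← hp, volB c R hR.le]
    set V0e : ℝ≥0∞ := (ENNReal.ofReal (R ^ n) * κ) ^ ((δ - δt) / (n : ℝ)) with hV0e
    set J : ℝ≥0∞ := ∫⁻ y, (v y * (ENNReal.ofReal (dist c y)) ^ (-((n : ℝ) - αt + δ))) ^ p
        ∂(volume.restrict ((ball c R)ᶜ)) with hJdef
    set Z : ℝ≥0∞ := ∑' k : ℕ, (c3 k) ^ p * I (k+1) with hZ
    have hJ : J ≤ Z := by
      rw [hJdef, hZ]
      have hsub : (ball c R)ᶜ ⊆ ⋃ k : ℕ,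
          (ball c ((2:ℝ) ^ (k+1) * R) \ ball c ((2:ℝ) ^ k * R)) := by
        intro y hy
        have hd : R ≤ dist y c := by
          rw [Set.mem_compl_iff, mem_ball, not_lt] at hy
          exact hy
        obtain ⟨k, hk1, hk2⟩ := exists_annulus hR hd
        exact Set.mem_iUnion.2 ⟨k, ⟨by rw [mem_ball]; exact hk2,
          by simp only [mem_ball, not_lt]; exact hk1⟩⟩
      calc (∫⁻ y in (ball c R)ᶜ,
              (v y * (ENNReal.ofReal (dist c y)) ^ (-((n : ℝ) - αt + δ))) ^ p ∂volume)
          ≤ ∫⁻ y in ⋃ k : ℕ, (ball c ((2:ℝ) ^ (k+1) * R) \ ball c ((2:ℝ) ^ k * R)),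
              (v y * (ENNReal.ofReal (dist c y)) ^ (-((n : ℝ) - αt + δ))) ^ p ∂volume :=
            lintegral_mono_set hsub
        _ ≤ ∑' k : ℕ, ∫⁻ y in (ball c ((2:ℝ) ^ (k+1) * R) \ ball c ((2:ℝ) ^ k * R)),
              (v y * (ENNReal.ofReal (dist c y)) ^ (-((n : ℝ) - αt + δ))) ^ p ∂volume :=
            lintegral_iUnion_le _ _
        _ ≤ ∑' k : ℕ, (c3 k) ^ p * I (k+1) := by
            refine ENNReal.tsum_le_tsum fun k => ?_
            calc (∫⁻ y in (ball c ((2:ℝ) ^ (k+1) * R) \ ball c ((2:ℝ) ^ k * R)),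
                    (v y * (ENNReal.ofReal (dist c y)) ^ (-((n : ℝ) - αt + δ))) ^ p ∂volume)
                ≤ ∫⁻ y in (ball c ((2:ℝ) ^ (k+1) * R) \ ball c ((2:ℝ) ^ k * R)),
                    (c3 k) ^ p * v y ^ p ∂volume := by
                  refine setLIntegral_mono' (measurableSet_ball.diff measurableSet_ball)
                    fun y hy => ?_
                  have hdy : (2:ℝ) ^ k * R ≤ dist c y := by
                    have := hy.2
                    rw [mem_ball, not_lt, dist_comm] at this
                    exact this
                  have h2 : (ENNReal.ofReal (dist c y)) ^ (-((n : ℝ) - αt + δ)) ≤ c3 k := by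
                    simp only [hc3]
                    rw [ENNReal.rpow_neg, ENNReal.rpow_neg]
                    exact ENNReal.inv_le_inv.mpr
                      (ENNReal.rpow_le_rpow (ENNReal.ofReal_le_ofReal hdy) hβ.le)
                  calc (v y * (ENNReal.ofReal (dist c y)) ^ (-((n : ℝ) - αt + δ))) ^ p
                      ≤ (v y * c3 k) ^ p :=
                        ENNReal.rpow_le_rpow (mul_le_mul' le_rfl h2) hp0.le
                    _ = (c3 k) ^ p * v y ^ p := by
                        rw [ENNReal.mul_rpow_of_nonneg _ _ hp0.le]; ring
              _ = (c3 k) ^ p * ∫⁻ y in (ball c ((2:ℝ) ^ (k+1) * R) \ ball c ((2:ℝ) ^ k * R)),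
                    v y ^ p ∂volume := by
                  rw [lintegral_const_mul' _ _
                    (ENNReal.rpow_ne_top_of_nonneg hp0.le (hc3t k))]
              _ ≤ (c3 k) ^ p * I (k+1) := by
                  gcongr
                  exact lintegral_mono_set Set.diff_subset
    have hmain : W0 ^ p * V0e ^ p * Z ≤ (C * (M * D)) ^ p * G := by
      calc W0 ^ p * V0e ^ p * Z
          = ∑' k : ℕ, W0 ^ p * V0e ^ p * ((c3 k) ^ p * I (k+1)) := by
            rw [hZ, ← ENNReal.tsum_mul_left]
        _ = ∑' k : ℕ, (W0 * V0e * c3 k * (I (k+1)) ^ (1/p)) ^ p := by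
            refine tsum_congr fun k => ?_
            rw [ENNReal.mul_rpow_of_nonneg _ _ hp0.le, ENNReal.mul_rpow_of_nonneg _ _ hp0.le,
              ENNReal.mul_rpow_of_nonneg _ _ hp0.le, hcancel']
            ring
        _ ≤ ∑' k : ℕ, (C * (M * D) * q ^ k) ^ p :=
            ENNReal.tsum_le_tsum fun k => ENNReal.rpow_le_rpow (key k) hp0.le
        _ = ∑' k : ℕ, (C * (M * D)) ^ p * (q ^ p) ^ k := by
            refine tsum_congr fun k => ?_
            rw [ENNReal.mul_rpow_of_nonneg _ _ hp0.le, ← ENNReal.rpow_natCast q k,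
              ← ENNReal.rpow_mul, mul_comm (k:ℝ) p, ENNReal.rpow_mul, ENNReal.rpow_natCast]
        _ = (C * (M * D)) ^ p * G := by
            rw [ENNReal.tsum_mul_left, ENNReal.tsum_geometric, hG]
    calc W0 * V0e * J ^ (1/p)
        ≤ W0 * V0e * Z ^ (1/p) := by gcongr
      _ = (W0 ^ p * V0e ^ p * Z) ^ (1/p) := by
          rw [ENNReal.mul_rpow_of_nonneg _ _ h1p, ENNReal.mul_rpow_of_nonneg _ _ h1p,
            hcancel, hcancel]
      _ ≤ ((C * (M * D)) ^ p * G) ^ (1/p) := ENNReal.rpow_le_rpow hmain h1p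
      _ = C * (M * D) * G ^ (1/p) := by
          rw [ENNReal.mul_rpow_of_nonneg _ _ h1p, hcancel]
      _ = c0 * C := by rw [hc0]; ring
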